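/- Let L > 0 and let G : ℝ → ℝ be the 2πL-periodic function with G(p) = e^{-|p-2mπL|} for (2m-1)πL ≤ p < (2m+1)πL, m ∈ ℤ. Let T > 0, η_max > 0 with πL > 3 η_max² T, ε ≥ 0, and let f : ℝ → ℂ be measurable with ∫_ℝ |f(η)|² dη < ∞ and ∫_{|η| > √3 η_max} e^{2η²T} |f(η)|² dη ≤ ε². Then ∫_0^T ∫_ℝ η² | e^{-| -πL + η²(t-T) |} - G(-πL + η²(t-T)) |² |f(η)|² dη dt ≤ (5/2) e^{-2(πL - 3η_max²T)} ∫_ℝ |f(η)|² dη + e^{-3η_max²T} ε². -/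

import Mathlib

open MeasureTheory Real Set

set_option maxHeartbeats 1000000

private lemma G_bounds {L : ℝ} (hc : 0 < π * L) {G : ℝ → ℝ}
    (hG : ∀ (m : ℤ) (p : ℝ), (2 * (m : ℝ) - 1) * (π * L) ≤ p →
      p < (2 * (m : ℝ) + 1) * (π * L) → G p = Real.exp (-|p - 2 * (m : ℝ) * (π * L)|))
    (p : ℝ) : 0 ≤ G p ∧ G p ≤ 1 := by
  set c := π * L with hcdef
  set m : ℤ := ⌊(p + c) / (2 * c)⌋ with hm
  have h2c : 0 < 2 * c := by linarith
  have h1 : (m : ℝ) * (2 * c) ≤ p + c := by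
    rw [← le_div_iff₀ h2c]; exact Int.floor_le _
  have h2 : p + c < ((m : ℝ) + 1) * (2 * c) := by
    rw [← div_lt_iff₀ h2c]; exact Int.lt_floor_add_one _
  have hrep := hG m p (by nlinarith) (by nlinarith)
  rw [hrep]
  refine ⟨(Real.exp_pos _).le, Real.exp_le_one_iff.mpr ?_⟩
  simp [neg_nonpos, abs_nonneg]

private lemma diff_sq_le_one {L : ℝ} (hc : 0 < π * L) {G : ℝ → ℝ}
    (hG : ∀ (m : ℤ) (p : ℝ), (2 * (m : ℝ) - 1) * (π * L) ≤ p →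
      p < (2 * (m : ℝ) + 1) * (π * L) → G p = Real.exp (-|p - 2 * (m : ℝ) * (π * L)|))
    (p : ℝ) : (Real.exp (-|p|) - G p) ^ 2 ≤ 1 := by
  obtain ⟨h0, h1⟩ := G_bounds hc hG p
  have he0 : 0 < Real.exp (-|p|) := Real.exp_pos _
  have he1 : Real.exp (-|p|) ≤ 1 := Real.exp_le_one_iff.mpr (by simp [abs_nonneg])
  nlinarith

private lemma diff_small {L : ℝ} (hc : 0 < π * L) {G : ℝ → ℝ}
    (hG : ∀ (m : ℤ) (p : ℝ), (2 * (m : ℝ) - 1) * (π * L) ≤ p →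
      p < (2 * (m : ℝ) + 1) * (π * L) → G p = Real.exp (-|p - 2 * (m : ℝ) * (π * L)|))
    {s : ℝ} (hs0 : 0 ≤ s) (hs : s < π * L) :
    (Real.exp (-|-(π * L) - s|) - G (-(π * L) - s)) ^ 2
      ≤ Real.exp (-(2 * (π * L))) * Real.exp (2 * s) := by
  set c := π * L with hcdef
  have habs : |-c - s| = c + s := by
    rw [abs_of_nonpos (by linarith)]; ring
  have hGv : G (-c - s) = Real.exp (-(c - s)) := by
    rcases eq_or_lt_of_le hs0 with h0 | h0
    · have := hG 0 (-c - s) (by push_cast; nlinarith) (by push_cast; nlinarith)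
      rw [this]
      congr 1
      rw [show -c - s - 2 * ((0 : ℤ) : ℝ) * c = -c - s by push_cast; ring, habs]
      linarith
    · have := hG (-1) (-c - s) (by push_cast; nlinarith) (by push_cast; nlinarith)
      rw [this]
      congr 1
      rw [show -c - s - 2 * ((-1 : ℤ) : ℝ) * c = c - s by push_cast; ring,
        abs_of_nonneg (by linarith)]
  rw [habs, hGv]
  have key : (Real.exp (-(c + s)) - Real.exp (-(c - s))) ^ 2 ≤ Real.exp (-(c - s)) ^ 2 := by
    have e1 : Real.exp (-(c + s)) ≤ Real.exp (-(c - s)) :=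
      Real.exp_le_exp.mpr (by linarith)
    have e2 : 0 < Real.exp (-(c + s)) := Real.exp_pos _
    have e3 : 0 < Real.exp (-(c - s)) := Real.exp_pos _
    nlinarith
  calc (Real.exp (-(c + s)) - Real.exp (-(c - s))) ^ 2
      ≤ Real.exp (-(c - s)) ^ 2 := key
    _ = Real.exp (-(2 * c)) * Real.exp (2 * s) := by
        rw [sq, ← Real.exp_add, ← Real.exp_add]; congr 1; ring

/-- Lemma 4.1 of the paper (Fourier-side form): time-integrated squared `H¹(x)`
seminorm of the boundary error at `p = -πL` between the whole-line and the
`p`-periodic Schrödingerised solutions. `G` is the `2πL`-periodic extension of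
`e^{-|p|}` and `f` plays the role of `û_T`. -/
theorem boundary_error_estimate
    (L : ℝ) (hL : 0 < L) (G : ℝ → ℝ)
    (hG : ∀ (m : ℤ) (p : ℝ), (2 * (m : ℝ) - 1) * (π * L) ≤ p →
      p < (2 * (m : ℝ) + 1) * (π * L) → G p = Real.exp (-|p - 2 * (m : ℝ) * (π * L)|))
    (T ηmax ε : ℝ) (hT : 0 < T) (hηmax : 0 < ηmax)
    (hdomain : π * L > 3 * ηmax ^ 2 * T) (hε : 0 ≤ ε)
    (f : ℝ → ℂ) (hf : Measurable f)
    (hfint : Integrable fun η : ℝ => ‖f η‖ ^ 2)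
    (htail_int : IntegrableOn (fun η : ℝ => Real.exp (2 * η ^ 2 * T) * ‖f η‖ ^ 2)
      {η : ℝ | Real.sqrt 3 * ηmax < |η|})
    (htail : ∫ η in {η : ℝ | Real.sqrt 3 * ηmax < |η|},
      Real.exp (2 * η ^ 2 * T) * ‖f η‖ ^ 2 ≤ ε ^ 2) :
    (∫ t in (0 : ℝ)..T, ∫ η : ℝ,
        η ^ 2 * (Real.exp (-|(-(π * L)) + η ^ 2 * (t - T)|)
          - G ((-(π * L)) + η ^ 2 * (t - T))) ^ 2 * ‖f η‖ ^ 2) ≤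
      5 / 2 * Real.exp (-2 * (π * L - 3 * ηmax ^ 2 * T)) * (∫ η : ℝ, ‖f η‖ ^ 2) +
        Real.exp (-3 * ηmax ^ 2 * T) * ε ^ 2 := by
  have hπ : 0 < π := Real.pi_pos
  have hc : 0 < π * L := by positivity
  set a : ℝ := Real.sqrt 3 * ηmax with ha_def
  have ha : 0 < a := by positivity
  have hasq : a ^ 2 = 3 * ηmax ^ 2 := by
    rw [ha_def, mul_pow, Real.sq_sqrt (by norm_num : (3:ℝ) ≥ 0)]
  set A : Set ℝ := {η : ℝ | a < |η|} with hA_def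
  have hA : MeasurableSet A := measurableSet_lt measurable_const continuous_abs.measurable
  have hmemAc : ∀ η : ℝ, η ∈ Aᶜ ↔ |η| ≤ a := by
    intro η; simp [hA_def, not_lt]
  -- integrability of η² ‖f η‖² on A
  have hIfA : IntegrableOn (fun η : ℝ => η ^ 2 * ‖f η‖ ^ 2) A := by
    apply Integrable.mono' (htail_int.const_mul (1 / (2 * T)))
    · exact ((measurable_id.pow_const 2).mul ((hf.norm).pow_const 2)).aestronglyMeasurable
    · refine ae_of_all _ fun η => ?_
      have h1 : 2 * η ^ 2 * T ≤ Real.exp (2 * η ^ 2 * T) := by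
        nlinarith [Real.add_one_le_exp (2 * η ^ 2 * T)]
      rw [Real.norm_eq_abs, abs_of_nonneg (by positivity)]
      have hfn : (0:ℝ) ≤ ‖f η‖ ^ 2 := by positivity
      rw [div_mul_eq_mul_div, one_mul, le_div_iff₀ (by positivity : (0:ℝ) < 2 * T)]
      nlinarith
  -- integrand over the complement region, at fixed time t
  have hIfAc_t : ∀ t : ℝ,
      IntegrableOn (fun η : ℝ => η ^ 2 * Real.exp (2 * η ^ 2 * (T - t)) * ‖f η‖ ^ 2) Aᶜ := by
    intro t
    apply Integrable.mono'
      ((hfint.const_mul (3 * ηmax ^ 2 * Real.exp (6 * ηmax ^ 2 * |T - t|))).integrableOn)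
    · exact (((measurable_id.pow_const 2).mul
        (((measurable_id.pow_const 2).const_mul 2).mul measurable_const).exp).mul
        ((hf.norm).pow_const 2)).aestronglyMeasurable
    · filter_upwards [ae_restrict_mem hA.compl] with η hη
      rw [hmemAc] at hη
      have hsq : η ^ 2 ≤ 3 * ηmax ^ 2 := by
        rw [← hasq, ← sq_abs]; exact pow_le_pow_left₀ (abs_nonneg _) hη 2
      have hexp : Real.exp (2 * η ^ 2 * (T - t)) ≤ Real.exp (6 * ηmax ^ 2 * |T - t|) := by
        apply Real.exp_le_exp.mpr
        rcases le_or_gt 0 (T - t) with h | h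
        · rw [abs_of_nonneg h]; nlinarith [sq_nonneg η]
        · rw [abs_of_neg h]; nlinarith [sq_nonneg η, sq_nonneg ηmax, Real.exp_pos (0:ℝ)]
      rw [Real.norm_eq_abs, abs_of_nonneg (by positivity)]
      gcongr
  set φ : ℝ → ℝ := fun t => ∫ η in Aᶜ, η ^ 2 * Real.exp (2 * η ^ 2 * (T - t)) * ‖f η‖ ^ 2
    with hφ_def
  have hφanti : Antitone φ := by
    intro t1 t2 h12
    apply setIntegral_mono_on (hIfAc_t t2) (hIfAc_t t1) hA.compl
    intro η _
    have h : Real.exp (2 * η ^ 2 * (T - t2)) ≤ Real.exp (2 * η ^ 2 * (T - t1)) :=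
      Real.exp_le_exp.mpr (by nlinarith [sq_nonneg η])
    gcongr
  have hφnonneg : ∀ t, 0 ≤ φ t := fun t =>
    setIntegral_nonneg hA.compl fun η _ => by positivity
  have hφbound : ∀ t ∈ Ioc (0:ℝ) T,
      φ t ≤ 3 * ηmax ^ 2 * Real.exp (6 * ηmax ^ 2 * T) * ∫ η : ℝ, ‖f η‖ ^ 2 := by
    intro t ht
    have step : φ t ≤ ∫ η in Aᶜ, 3 * ηmax ^ 2 * Real.exp (6 * ηmax ^ 2 * T) * ‖f η‖ ^ 2 := by
      apply setIntegral_mono_on (hIfAc_t t)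
        ((hfint.const_mul _).integrableOn) hA.compl
      intro η hη
      rw [hmemAc] at hη
      have hsq : η ^ 2 ≤ 3 * ηmax ^ 2 := by
        rw [← hasq, ← sq_abs]; exact pow_le_pow_left₀ (abs_nonneg _) hη 2
      have hexp : Real.exp (2 * η ^ 2 * (T - t)) ≤ Real.exp (6 * ηmax ^ 2 * T) := by
        apply Real.exp_le_exp.mpr
        nlinarith [sq_nonneg η, ht.1, ht.2]
      gcongr
    calc φ t ≤ _ := step
      _ = 3 * ηmax ^ 2 * Real.exp (6 * ηmax ^ 2 * T) * ∫ η in Aᶜ, ‖f η‖ ^ 2 :=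
          integral_const_mul _ _
      _ ≤ 3 * ηmax ^ 2 * Real.exp (6 * ηmax ^ 2 * T) * ∫ η : ℝ, ‖f η‖ ^ 2 := by
          apply mul_le_mul_of_nonneg_left
            (setIntegral_le_integral hfint (ae_of_all _ fun η => by positivity))
            (by positivity)
  -- pointwise (in t) comparison of the inner integral with the majorant
  have hstep1 : ∀ t ∈ Ioc (0:ℝ) T,
      (∫ η : ℝ, η ^ 2 * (Real.exp (-|(-(π * L)) + η ^ 2 * (t - T)|)
          - G ((-(π * L)) + η ^ 2 * (t - T))) ^ 2 * ‖f η‖ ^ 2)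
        ≤ Real.exp (-(2 * (π * L))) * φ t + ∫ η in A, η ^ 2 * ‖f η‖ ^ 2 := by
    intro t ht
    set M : ℝ → ℝ := fun η => if |η| ≤ a then
        Real.exp (-(2 * (π * L))) * (η ^ 2 * Real.exp (2 * η ^ 2 * (T - t)) * ‖f η‖ ^ 2)
      else η ^ 2 * ‖f η‖ ^ 2 with hM_def
    have hMint : Integrable M := by
      rw [← integrableOn_univ, ← Set.compl_union_self A]
      apply IntegrableOn.union
      · exact IntegrableOn.congr_fun ((hIfAc_t t).const_mul (Real.exp (-(2 * (π * L)))))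
          (fun η hη => (if_pos ((hmemAc η).mp hη)).symm) hA.compl
      · exact IntegrableOn.congr_fun hIfA
          (fun η hη => (if_neg (not_le.mpr hη)).symm) hA
    have hle : ∀ η : ℝ, η ^ 2 * (Real.exp (-|(-(π * L)) + η ^ 2 * (t - T)|)
        - G ((-(π * L)) + η ^ 2 * (t - T))) ^ 2 * ‖f η‖ ^ 2 ≤ M η := by
      intro η
      by_cases hsm : |η| ≤ a
      · have harg : -(π * L) + η ^ 2 * (t - T) = -(π * L) - η ^ 2 * (T - t) := by ring
        rw [harg]
        have hs0 : 0 ≤ η ^ 2 * (T - t) := mul_nonneg (sq_nonneg η) (by linarith [ht.2])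
        have hsq : η ^ 2 ≤ 3 * ηmax ^ 2 := by
          rw [← hasq, ← sq_abs]; exact pow_le_pow_left₀ (abs_nonneg _) hsm 2
        have hslt : η ^ 2 * (T - t) < π * L := by
          nlinarith [sq_nonneg η, ht.1, ht.2]
        have hd := diff_small hc hG hs0 hslt
        rw [show (2:ℝ) * (η ^ 2 * (T - t)) = 2 * η ^ 2 * (T - t) from
          (mul_assoc 2 (η ^ 2) (T - t)).symm] at hd
        calc η ^ 2 * (Real.exp (-|-(π * L) - η ^ 2 * (T - t)|)
              - G (-(π * L) - η ^ 2 * (T - t))) ^ 2 * ‖f η‖ ^ 2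
            ≤ η ^ 2 * (Real.exp (-(2 * (π * L))) * Real.exp (2 * η ^ 2 * (T - t)))
              * ‖f η‖ ^ 2 := by gcongr
          _ = Real.exp (-(2 * (π * L)))
              * (η ^ 2 * Real.exp (2 * η ^ 2 * (T - t)) * ‖f η‖ ^ 2) := by ring
          _ = M η := (if_pos hsm).symm
      · have hb := diff_sq_le_one hc hG ((-(π * L)) + η ^ 2 * (t - T))
        calc η ^ 2 * (Real.exp (-|(-(π * L)) + η ^ 2 * (t - T)|)
              - G ((-(π * L)) + η ^ 2 * (t - T))) ^ 2 * ‖f η‖ ^ 2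
            ≤ η ^ 2 * 1 * ‖f η‖ ^ 2 := by gcongr
          _ = η ^ 2 * ‖f η‖ ^ 2 := by ring
          _ = M η := (if_neg hsm).symm
    calc (∫ η : ℝ, η ^ 2 * (Real.exp (-|(-(π * L)) + η ^ 2 * (t - T)|)
            - G ((-(π * L)) + η ^ 2 * (t - T))) ^ 2 * ‖f η‖ ^ 2)
        ≤ ∫ η : ℝ, M η :=
          integral_mono_of_nonneg (ae_of_all _ fun η => by positivity) hMint
            (ae_of_all _ hle)
      _ = (∫ η in A, M η) + ∫ η in Aᶜ, M η := (integral_add_compl hA hMint).symm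
      _ = (∫ η in A, η ^ 2 * ‖f η‖ ^ 2) + Real.exp (-(2 * (π * L))) * φ t := by
          congr 1
          · exact setIntegral_congr_fun hA (fun η hη => if_neg (not_le.mpr hη))
          · rw [setIntegral_congr_fun hA.compl
              (fun η (hη : η ∈ Aᶜ) => if_pos ((hmemAc η).mp hη) :
                EqOn M (fun η => Real.exp (-(2 * (π * L)))
                  * (η ^ 2 * Real.exp (2 * η ^ 2 * (T - t)) * ‖f η‖ ^ 2)) Aᶜ),
              integral_const_mul]
      _ = Real.exp (-(2 * (π * L))) * φ t + ∫ η in A, η ^ 2 * ‖f η‖ ^ 2 := by ring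
  -- integrability of the majorant in time
  have hconst : IntegrableOn (fun _ : ℝ => 3 * ηmax ^ 2 * Real.exp (6 * ηmax ^ 2 * T)
          * ∫ η : ℝ, ‖f η‖ ^ 2) (Ioc (0:ℝ) T) :=
    integrableOn_const measure_Ioc_lt_top.ne
  have hφmeas : AEStronglyMeasurable φ (volume.restrict (Ioc (0:ℝ) T)) :=
    hφanti.measurable.aestronglyMeasurable.restrict
  have hφInt : IntegrableOn φ (Ioc (0:ℝ) T) := by
    refine Integrable.mono' hconst hφmeas ?_
    filter_upwards [ae_restrict_mem measurableSet_Ioc] with t ht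
    rw [Real.norm_eq_abs, abs_of_nonneg (hφnonneg t)]
    exact hφbound t ht
  have htailIInt : IntegrableOn (fun _ : ℝ => ∫ η in A, η ^ 2 * ‖f η‖ ^ 2) (Ioc (0:ℝ) T) :=
    integrableOn_const measure_Ioc_lt_top.ne
  -- Fubini for the small-frequency part
  have hint : Integrable
      (Function.uncurry fun t η => η ^ 2 * Real.exp (2 * η ^ 2 * (T - t)) * ‖f η‖ ^ 2)
      ((volume.restrict (Ioc (0:ℝ) T)).prod (volume.restrict Aᶜ)) := by
    have hprodmem : ∀ᵐ p : ℝ × ℝ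
        ∂((volume.restrict (Ioc (0:ℝ) T)).prod (volume.restrict Aᶜ)),
        p.1 ∈ Ioc (0:ℝ) T ∧ p.2 ∈ Aᶜ := by
      rw [Measure.prod_restrict]
      filter_upwards [ae_restrict_mem (measurableSet_Ioc.prod hA.compl)] with p hp
      exact ⟨hp.1, hp.2⟩
    have hc1 : IntegrableOn (fun _ : ℝ => 3 * ηmax ^ 2 * Real.exp (6 * ηmax ^ 2 * T))
        (Ioc (0:ℝ) T) := integrableOn_const measure_Ioc_lt_top.ne
    have hmaj : Integrable (fun z : ℝ × ℝ =>
        (3 * ηmax ^ 2 * Real.exp (6 * ηmax ^ 2 * T)) * ‖f z.2‖ ^ 2)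
        ((volume.restrict (Ioc (0:ℝ) T)).prod (volume.restrict Aᶜ)) :=
      hc1.mul_prod (hfint.restrict (s := Aᶜ))
    refine Integrable.mono' hmaj ?_ ?_
    · exact (((measurable_snd.pow_const 2).mul
        ((((measurable_snd.pow_const 2).const_mul 2).mul
          (measurable_const.sub measurable_fst)).exp)).mul
        (((hf.comp measurable_snd).norm).pow_const 2)).aestronglyMeasurable
    · filter_upwards [hprodmem] with p hp
      rcases hp with ⟨hp1, hp2⟩
      rw [hmemAc] at hp2
      have hsq : p.2 ^ 2 ≤ 3 * ηmax ^ 2 := by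
        rw [← hasq, ← sq_abs]; exact pow_le_pow_left₀ (abs_nonneg _) hp2 2
      have hexp : Real.exp (2 * p.2 ^ 2 * (T - p.1)) ≤ Real.exp (6 * ηmax ^ 2 * T) := by
        apply Real.exp_le_exp.mpr
        nlinarith [sq_nonneg p.2, hp1.1, hp1.2]
      rw [Function.uncurry, Real.norm_eq_abs, abs_of_nonneg (by positivity)]
      gcongr
  have hswap : (∫ t in Ioc (0:ℝ) T, φ t)
      = ∫ η in Aᶜ, ∫ t in Ioc (0:ℝ) T,
          η ^ 2 * Real.exp (2 * η ^ 2 * (T - t)) * ‖f η‖ ^ 2 := by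
    rw [hφ_def]
    exact integral_integral_swap hint
  -- exact time integral
  have hin : ∀ η : ℝ, (∫ t in Ioc (0:ℝ) T, η ^ 2 * Real.exp (2 * η ^ 2 * (T - t)) * ‖f η‖ ^ 2)
      = (Real.exp (2 * η ^ 2 * T) - 1) / 2 * ‖f η‖ ^ 2 := by
    intro η
    rw [← intervalIntegral.integral_of_le hT.le]
    have hderiv : ∀ x ∈ Set.uIcc (0:ℝ) T,
        HasDerivAt (fun u => -(1/2) * Real.exp (2 * η ^ 2 * (T - u)) * ‖f η‖ ^ 2)
          (η ^ 2 * Real.exp (2 * η ^ 2 * (T - x)) * ‖f η‖ ^ 2) x := by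
      intro x _
      have h1 : HasDerivAt (fun u : ℝ => 2 * η ^ 2 * (T - u)) (2 * η ^ 2 * (0 - 1)) x :=
        ((hasDerivAt_const x T).sub (hasDerivAt_id x)).const_mul (2 * η ^ 2)
      have h2 := (h1.exp.const_mul (-(1/2 : ℝ))).mul_const (‖f η‖ ^ 2)
      refine h2.congr_deriv ?_
      ring
    have hcont : IntervalIntegrable
        (fun u : ℝ => η ^ 2 * Real.exp (2 * η ^ 2 * (T - u)) * ‖f η‖ ^ 2) volume 0 T := by
      apply Continuous.intervalIntegrable
      fun_prop
    rw [intervalIntegral.integral_eq_sub_of_hasDerivAt hderiv hcont]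
    rw [sub_self, mul_zero, Real.exp_zero, sub_zero]
    ring
  have hstep4 : (∫ t in Ioc (0:ℝ) T, φ t)
      ≤ Real.exp (6 * ηmax ^ 2 * T) / 2 * ∫ η : ℝ, ‖f η‖ ^ 2 := by
    rw [hswap, setIntegral_congr_fun hA.compl (fun η _ => hin η)]
    have hIleft : IntegrableOn (fun η : ℝ => (Real.exp (2 * η ^ 2 * T) - 1) / 2 * ‖f η‖ ^ 2) Aᶜ := by
      apply Integrable.mono'
        ((hfint.const_mul (Real.exp (6 * ηmax ^ 2 * T) / 2)).restrict (s := Aᶜ))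
      · exact ((((((measurable_id.pow_const 2).const_mul 2).mul_const T).exp.sub
          measurable_const).div_const 2).mul ((hf.norm).pow_const 2)).aestronglyMeasurable.restrict
      · filter_upwards [ae_restrict_mem hA.compl] with η hη
        rw [hmemAc] at hη
        have hsq : η ^ 2 ≤ 3 * ηmax ^ 2 := by
          rw [← hasq, ← sq_abs]; exact pow_le_pow_left₀ (abs_nonneg _) hη 2
        have h1 : (1:ℝ) ≤ Real.exp (2 * η ^ 2 * T) := Real.one_le_exp (by nlinarith [sq_nonneg η])
        have h2 : Real.exp (2 * η ^ 2 * T) ≤ Real.exp (6 * ηmax ^ 2 * T) :=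
          Real.exp_le_exp.mpr (by nlinarith)
        rw [Real.norm_eq_abs, abs_of_nonneg (mul_nonneg (by linarith) (by positivity))]
        have hfn : (0:ℝ) ≤ ‖f η‖ ^ 2 := by positivity
        nlinarith
    calc (∫ η in Aᶜ, (Real.exp (2 * η ^ 2 * T) - 1) / 2 * ‖f η‖ ^ 2)
        ≤ ∫ η in Aᶜ, Real.exp (6 * ηmax ^ 2 * T) / 2 * ‖f η‖ ^ 2 := by
          apply setIntegral_mono_on hIleft ((hfint.const_mul _).integrableOn) hA.compl
          intro η hη
          rw [hmemAc] at hη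
          have hsq : η ^ 2 ≤ 3 * ηmax ^ 2 := by
            rw [← hasq, ← sq_abs]; exact pow_le_pow_left₀ (abs_nonneg _) hη 2
          have h2 : Real.exp (2 * η ^ 2 * T) ≤ Real.exp (6 * ηmax ^ 2 * T) :=
            Real.exp_le_exp.mpr (by nlinarith)
          have hfn : (0:ℝ) ≤ ‖f η‖ ^ 2 := by positivity
          apply mul_le_mul_of_nonneg_right _ hfn
          linarith
      _ = Real.exp (6 * ηmax ^ 2 * T) / 2 * ∫ η in Aᶜ, ‖f η‖ ^ 2 := integral_const_mul _ _
      _ ≤ Real.exp (6 * ηmax ^ 2 * T) / 2 * ∫ η : ℝ, ‖f η‖ ^ 2 :=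
          mul_le_mul_of_nonneg_left
            (setIntegral_le_integral hfint (ae_of_all _ fun η => by positivity))
            (by positivity)
  have hstep5 : T * (∫ η in A, η ^ 2 * ‖f η‖ ^ 2) ≤ Real.exp (-3 * ηmax ^ 2 * T) * ε ^ 2 := by
    rw [← integral_const_mul]
    calc (∫ η in A, T * (η ^ 2 * ‖f η‖ ^ 2))
        ≤ ∫ η in A, Real.exp (-3 * ηmax ^ 2 * T) * (Real.exp (2 * η ^ 2 * T) * ‖f η‖ ^ 2) := by
          apply setIntegral_mono_on (hIfA.const_mul T) (htail_int.const_mul _) hA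
          intro η hη
          have hsq : 3 * ηmax ^ 2 < η ^ 2 := by
            have h : a < |η| := hη
            have h2 : a ^ 2 < |η| ^ 2 := by nlinarith [abs_nonneg η, ha]
            rw [← hasq, ← sq_abs η]; exact h2
          have hkey : T * η ^ 2 ≤ Real.exp (-3 * ηmax ^ 2 * T) * Real.exp (2 * η ^ 2 * T) := by
            rw [← Real.exp_add]
            have h2 : T * η ^ 2 ≤ Real.exp (T * η ^ 2) := by
              nlinarith [Real.add_one_le_exp (T * η ^ 2)]
            have h3 : Real.exp (T * η ^ 2) ≤ Real.exp (-3 * ηmax ^ 2 * T + 2 * η ^ 2 * T) :=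
              Real.exp_le_exp.mpr (by nlinarith)
            linarith
          have hfn : (0:ℝ) ≤ ‖f η‖ ^ 2 := by positivity
          calc T * (η ^ 2 * ‖f η‖ ^ 2) = (T * η ^ 2) * ‖f η‖ ^ 2 := by ring
            _ ≤ (Real.exp (-3 * ηmax ^ 2 * T) * Real.exp (2 * η ^ 2 * T)) * ‖f η‖ ^ 2 :=
                mul_le_mul_of_nonneg_right hkey hfn
            _ = Real.exp (-3 * ηmax ^ 2 * T) * (Real.exp (2 * η ^ 2 * T) * ‖f η‖ ^ 2) := by ring
      _ = Real.exp (-3 * ηmax ^ 2 * T) * ∫ η in A, Real.exp (2 * η ^ 2 * T) * ‖f η‖ ^ 2 :=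
          integral_const_mul _ _
      _ ≤ Real.exp (-3 * ηmax ^ 2 * T) * ε ^ 2 :=
          mul_le_mul_of_nonneg_left htail (Real.exp_pos _).le
  -- assemble
  have hgint : Integrable (fun t => Real.exp (-(2 * (π * L))) * φ t
      + ∫ η in A, η ^ 2 * ‖f η‖ ^ 2) (volume.restrict (Ioc (0:ℝ) T)) :=
    (hφInt.const_mul _).add htailIInt
  rw [intervalIntegral.integral_of_le hT.le]
  calc (∫ t in Ioc (0:ℝ) T, ∫ η : ℝ,
          η ^ 2 * (Real.exp (-|(-(π * L)) + η ^ 2 * (t - T)|)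
            - G ((-(π * L)) + η ^ 2 * (t - T))) ^ 2 * ‖f η‖ ^ 2)
      ≤ ∫ t in Ioc (0:ℝ) T, (Real.exp (-(2 * (π * L))) * φ t
          + ∫ η in A, η ^ 2 * ‖f η‖ ^ 2) := by
        apply integral_mono_of_nonneg
          (ae_of_all _ fun t => integral_nonneg fun η => by positivity) hgint
        filter_upwards [ae_restrict_mem measurableSet_Ioc] with t ht
        exact hstep1 t ht
    _ = Real.exp (-(2 * (π * L))) * (∫ t in Ioc (0:ℝ) T, φ t)
        + T * ∫ η in A, η ^ 2 * ‖f η‖ ^ 2 := by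
        rw [integral_add (hφInt.const_mul _) htailIInt, integral_const_mul]
        congr 1
        rw [integral_const, measureReal_def, Measure.restrict_apply_univ, Real.volume_Ioc, smul_eq_mul,
          sub_zero, ENNReal.toReal_ofReal hT.le]
    _ ≤ Real.exp (-(2 * (π * L))) * (Real.exp (6 * ηmax ^ 2 * T) / 2 * ∫ η : ℝ, ‖f η‖ ^ 2)
        + Real.exp (-3 * ηmax ^ 2 * T) * ε ^ 2 :=
        add_le_add (mul_le_mul_of_nonneg_left hstep4 (Real.exp_pos _).le) hstep5
    _ ≤ 5 / 2 * Real.exp (-2 * (π * L - 3 * ηmax ^ 2 * T)) * (∫ η : ℝ, ‖f η‖ ^ 2)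
        + Real.exp (-3 * ηmax ^ 2 * T) * ε ^ 2 := by
        have hI0 : (0:ℝ) ≤ ∫ η : ℝ, ‖f η‖ ^ 2 := integral_nonneg fun η => by positivity
        have hee : Real.exp (-(2 * (π * L))) * Real.exp (6 * ηmax ^ 2 * T)
            = Real.exp (-2 * (π * L - 3 * ηmax ^ 2 * T)) := by
          rw [← Real.exp_add]; congr 1; ring
        have hE : (0:ℝ) < Real.exp (-2 * (π * L - 3 * ηmax ^ 2 * T)) := Real.exp_pos _
        nlinarith [Real.exp_pos (-(2 * (π * L))), Real.exp_pos (6 * ηmax ^ 2 * T)]
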